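/- (Maurey/Barron sampling) Let H be a real Hilbert space and G ⊆ H with ‖g‖_H ≤ B for all g ∈ G. If f lies in the convex hull of G (a finite convex combination f = Σ_k γ_k g_k with γ_k ≥ 0, Σ γ_k = 1, g_k ∈ G), then for every m ∈ ℕ there exist g₁, …, g_m ∈ G such that ‖f - (1/m)Σ_{k=1}^m g_k‖_H ≤ B/√m. -/

import Mathlib

open Finset

lemma maurey_avg {K : ℕ} (w a : Fin K → ℝ) (hw : ∀ k, 0 ≤ w k)
    (hw1 : ∑ k, w k = 1) (c : ℝ) (h : ∑ k, w k * a k ≤ c) : ∃ k, a k ≤ c := by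
  by_contra hc
  push_neg at hc
  obtain ⟨k0, -, hk0⟩ := Finset.exists_ne_zero_of_sum_ne_zero (by rw [hw1]; norm_num :
    ∑ k, w k ≠ 0)
  have hlt : ∑ k, w k * c < ∑ k, w k * a k := by
    apply Finset.sum_lt_sum
    · intro i _
      exact mul_le_mul_of_nonneg_left (hc i).le (hw i)
    · exact ⟨k0, Finset.mem_univ _, by
        have := lt_of_le_of_ne (hw k0) (Ne.symm hk0)
        exact mul_lt_mul_of_pos_left (hc k0) this⟩
  rw [← Finset.sum_mul, hw1, one_mul] at hlt
  linarith

lemma maurey_key {H : Type*} [NormedAddCommGroup H] [InnerProductSpace ℝ H]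
    {K : ℕ} (γ : Fin K → ℝ) (v : Fin K → H) (u : H)
    (h0 : ∑ k, γ k • v k = 0) :
    ∑ k, γ k * ‖u + v k‖ ^ 2 = (∑ k, γ k) * ‖u‖ ^ 2 + ∑ k, γ k * ‖v k‖ ^ 2 := by
  have expand : ∀ k : Fin K, γ k * ‖u + v k‖ ^ 2
      = γ k * ‖u‖ ^ 2 + 2 * (inner ℝ u (γ k • v k) : ℝ) + γ k * ‖v k‖ ^ 2 := by
    intro k
    rw [@norm_add_sq_real, real_inner_smul_right]
    ring
  rw [Finset.sum_congr rfl (fun k _ => expand k)]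
  rw [Finset.sum_add_distrib, Finset.sum_add_distrib, ← Finset.sum_mul,
    ← Finset.mul_sum, ← inner_sum, h0, inner_zero_right]
  ring

theorem maurey_sampling {H : Type*} [NormedAddCommGroup H] [InnerProductSpace ℝ H]
    (G : Set H) (B : ℝ) (hG : ∀ g ∈ G, ‖g‖ ≤ B)
    {K : ℕ} (γ : Fin K → ℝ) (g : Fin K → H)
    (hγ : ∀ k, 0 ≤ γ k) (hγ1 : ∑ k, γ k = 1) (hg : ∀ k, g k ∈ G)
    (f : H) (hf : f = ∑ k, γ k • g k) :
    ∀ m : ℕ, 0 < m → ∃ gs : Fin m → H, (∀ i, gs i ∈ G) ∧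
      ‖f - (m : ℝ)⁻¹ • ∑ i, gs i‖ ≤ B / Real.sqrt m := by
  -- K is nonempty
  have hKpos : 0 < K := by
    by_contra h
    push_neg at h
    interval_cases K
    simp at hγ1
  have k0 : Fin K := ⟨0, hKpos⟩
  have hB : 0 ≤ B := le_trans (norm_nonneg _) (hG _ (hg k0))
  -- ∑ γ k • (f - g k) = 0
  have hzero : ∑ k, γ k • (f - g k) = 0 := by
    simp only [smul_sub, Finset.sum_sub_distrib, ← hf, ← Finset.sum_smul, hγ1, one_smul,
      sub_self]
  -- T := ∑ γ k ‖f - g k‖² ≤ B²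
  have hT : ∑ k, γ k * ‖f - g k‖ ^ 2 ≤ B ^ 2 := by
    have h1 := maurey_key γ (fun k => f - g k) (-f) hzero
    have h2 : ∀ k : Fin K, ‖-f + (f - g k)‖ = ‖g k‖ := by
      intro k
      rw [show -f + (f - g k) = -(g k) by abel, norm_neg]
    simp only [h2, norm_neg] at h1
    have h3 : ∑ k, γ k * ‖g k‖ ^ 2 ≤ B ^ 2 := by
      calc ∑ k, γ k * ‖g k‖ ^ 2 ≤ ∑ k, γ k * B ^ 2 := by
            apply Finset.sum_le_sum
            intro k _
            exact mul_le_mul_of_nonneg_left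
              (pow_le_pow_left₀ (norm_nonneg _) (hG _ (hg k)) 2) (hγ k)
        _ = B ^ 2 := by rw [← Finset.sum_mul, hγ1, one_mul]
    nlinarith [sq_nonneg ‖f‖, h1, h3, hγ1]
  -- main claim, by induction
  have claim : ∀ m : ℕ, 0 < m → ∃ σ : Fin m → Fin K,
      ‖f - (m : ℝ)⁻¹ • ∑ i, g (σ i)‖ ^ 2 ≤ B ^ 2 / m := by
    intro m hm
    induction m with
    | zero => omega
    | succ n ih =>
      rcases Nat.eq_zero_or_pos n with hn | hn
      · -- base case m = 1
        subst hn
        obtain ⟨k, hk⟩ := maurey_avg γ (fun k => ‖f - g k‖ ^ 2) hγ hγ1 _ hT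
        refine ⟨fun _ => k, ?_⟩
        simpa using hk
      · obtain ⟨σ, hσ⟩ := ih hn
        set S : H := ∑ i, g (σ i) with hS
        set e : H := f - (n : ℝ)⁻¹ • S with he
        have hnR : (0 : ℝ) < n := by exact_mod_cast hn
        have hn1R : (0 : ℝ) < (n : ℝ) + 1 := by positivity
        -- decomposition of the new error
        have hdecomp : ∀ k : Fin K,
            f - ((n : ℝ) + 1)⁻¹ • (S + g k)
              = ((n : ℝ) / ((n : ℝ) + 1)) • e + ((n : ℝ) + 1)⁻¹ • (f - g k) := by
          intro k
          rw [he]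
          match_scalars <;> (field_simp; try ring)
        have hz2 : ∑ k, γ k • (((n : ℝ) + 1)⁻¹ • (f - g k)) = 0 := by
          rw [Finset.sum_congr rfl (fun k _ => smul_comm (γ k) _ (f - g k)),
            ← Finset.smul_sum, hzero, smul_zero]
        have hkey := maurey_key γ (fun k => ((n : ℝ) + 1)⁻¹ • (f - g k))
          (((n : ℝ) / ((n : ℝ) + 1)) • e) hz2
        -- bound the RHS
        have hbound : ∑ k, γ k * ‖f - ((n : ℝ) + 1)⁻¹ • (S + g k)‖ ^ 2
            ≤ B ^ 2 / ((n : ℝ) + 1) := by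
          rw [Finset.sum_congr rfl (fun k _ => by rw [hdecomp k]), hkey, hγ1, one_mul]
          have e1 : ‖((n : ℝ) / ((n : ℝ) + 1)) • e‖ ^ 2
              = ((n : ℝ) / ((n : ℝ) + 1)) ^ 2 * ‖e‖ ^ 2 := by
            rw [norm_smul, mul_pow, Real.norm_eq_abs, sq_abs]
          have e2 : ∑ k, γ k * ‖((n : ℝ) + 1)⁻¹ • (f - g k)‖ ^ 2
              = ((n : ℝ) + 1)⁻¹ ^ 2 * ∑ k, γ k * ‖f - g k‖ ^ 2 := by
            rw [Finset.mul_sum]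
            refine Finset.sum_congr rfl fun k _ => ?_
            rw [norm_smul, mul_pow, Real.norm_eq_abs, sq_abs]
            ring
          rw [e1, e2]
          have hesq : ‖e‖ ^ 2 ≤ B ^ 2 / n := hσ
          have h1 : ((n : ℝ) / ((n : ℝ) + 1)) ^ 2 * ‖e‖ ^ 2
              ≤ ((n : ℝ) / ((n : ℝ) + 1)) ^ 2 * (B ^ 2 / n) :=
            mul_le_mul_of_nonneg_left hesq (by positivity)
          have h2 : ((n : ℝ) + 1)⁻¹ ^ 2 * ∑ k, γ k * ‖f - g k‖ ^ 2
              ≤ ((n : ℝ) + 1)⁻¹ ^ 2 * B ^ 2 :=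
            mul_le_mul_of_nonneg_left hT (by positivity)
          have harith : ((n : ℝ) / ((n : ℝ) + 1)) ^ 2 * (B ^ 2 / n)
              + ((n : ℝ) + 1)⁻¹ ^ 2 * B ^ 2 = B ^ 2 / ((n : ℝ) + 1) := by
            field_simp
          linarith
        obtain ⟨k, hk⟩ := maurey_avg γ
          (fun k => ‖f - ((n : ℝ) + 1)⁻¹ • (S + g k)‖ ^ 2) hγ hγ1 _ hbound
        refine ⟨Fin.snoc σ k, ?_⟩
        have hsum : ∑ i : Fin (n + 1), g ((Fin.snoc σ k : Fin (n+1) → Fin K) i) = S + g k := by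
          rw [Fin.sum_univ_castSucc]
          simp [hS]
        rw [hsum]
        push_cast
        exact hk
  -- conclude
  intro m hm
  obtain ⟨σ, hσ⟩ := claim m hm
  refine ⟨fun i => g (σ i), fun i => hg _, ?_⟩
  have hmR : (0 : ℝ) < m := by exact_mod_cast hm
  have h1 : ‖f - (m : ℝ)⁻¹ • ∑ i, g (σ i)‖
      ≤ Real.sqrt (B ^ 2 / m) := by
    rw [← Real.sqrt_sq (norm_nonneg (f - (m : ℝ)⁻¹ • ∑ i, g (σ i)))]
    exact Real.sqrt_le_sqrt hσ
  calc ‖f - (m : ℝ)⁻¹ • ∑ i, g (σ i)‖ ≤ Real.sqrt (B ^ 2 / m) := h1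
    _ = B / Real.sqrt m := by
        rw [Real.sqrt_div (by positivity : (0:ℝ) ≤ B ^ 2), Real.sqrt_sq hB]
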